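/- Let M ∈ F_q[T] be monic irreducible of degree d and let C_M(Z) be its Carlitz polynomial. Then C_M(Z)/Z ∈ F_q[T][Z] is an Eisenstein polynomial in Z at the prime M: all non-leading coefficients are divisible by M, the constant term equals M (hence not divisible by M²), and the leading coefficient is 1. Consequently C_M(Z)/Z is irreducible over F_q(T). -/

import Mathlib

open Polynomial


lemma stmt7_not_dvd (Fq : Type) [Field Fq] [Fintype Fq]
    {M : Polynomial Fq} (hmonic : M.Monic) (hirr : Irreducible M)
    {j : ℕ} (hj1 : 1 ≤ j) (hjd : j < M.natDegree) :
    ¬ M ∣ (X ^ (Fintype.card Fq ^ j) - X) := by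
  intro hdvd
  haveI : Fact (Irreducible M) := ⟨hirr⟩
  have hq1 : 1 < Fintype.card Fq := Fintype.one_lt_card
  set K := AdjoinRoot M
  set p := ringChar Fq with hpdef
  haveI hcp : CharP Fq p := ringChar.charP Fq
  obtain ⟨e, hp, hq⟩ := FiniteField.card Fq p
  haveI : Fact p.Prime := ⟨hp⟩
  haveI : CharP K p := charP_of_injective_algebraMap' (A := K) Fq p
  have hpe : p ^ (e * j : ℕ) = Fintype.card Fq ^ j := by rw [hq]; exact pow_mul p _ j
  -- the root satisfies x ^ q^j = x
  have hroot : (AdjoinRoot.root M) ^ Fintype.card Fq ^ j = AdjoinRoot.root M := by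
    have h0 : AdjoinRoot.mk M (X ^ Fintype.card Fq ^ j - X) = 0 := AdjoinRoot.mk_eq_zero.mpr hdvd
    rw [map_sub, map_pow, AdjoinRoot.mk_X] at h0
    exact sub_eq_zero.mp h0
  -- every element satisfies x ^ q^j = x
  have hhom : ((iterateFrobenius K p (e * j)).comp (AdjoinRoot.mk M)) = AdjoinRoot.mk M := by
    apply Polynomial.ringHom_ext
    · intro a
      rw [RingHom.comp_apply, iterateFrobenius_def, hpe, ← map_pow, ← Polynomial.C_pow,
        FiniteField.pow_card_pow]
    · rw [RingHom.comp_apply, iterateFrobenius_def, hpe, AdjoinRoot.mk_X, hroot]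
  have hall : ∀ x : K, x ^ Fintype.card Fq ^ j = x := by
    intro x
    obtain ⟨f, rfl⟩ := AdjoinRoot.mk_surjective x
    have := RingHom.congr_fun hhom f
    simpa [iterateFrobenius_def, hpe] using this
  -- cardinality
  haveI : Fintype K := Module.fintypeOfFintype (AdjoinRoot.powerBasis' hmonic).basis
  have hcard : Fintype.card K = Fintype.card Fq ^ M.natDegree := by
    rw [Module.card_fintype (AdjoinRoot.powerBasis' hmonic).basis, Fintype.card_fin]
    rfl
  obtain ⟨ζ, hζ⟩ := IsCyclic.exists_generator (α := Kˣ)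
  have horder : orderOf ζ = Fintype.card Fq ^ M.natDegree - 1 := by
    rw [orderOf_eq_card_of_forall_mem_zpowers hζ, Nat.card_eq_fintype_card,
      Fintype.card_units, hcard]
  have hζ1 : ζ ^ (Fintype.card Fq ^ j - 1) = 1 := by
    have hu : ζ ^ Fintype.card Fq ^ j = ζ := by
      ext
      push_cast
      exact hall ζ
    rw [pow_sub ζ (Nat.one_le_pow _ _ (by omega)), hu]
    simp
  have hdvd2 : Fintype.card Fq ^ M.natDegree - 1 ∣ Fintype.card Fq ^ j - 1 :=
    horder ▸ orderOf_dvd_of_pow_eq_one hζ1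
  have hle : Fintype.card Fq ^ M.natDegree - 1 ≤ Fintype.card Fq ^ j - 1 :=
    Nat.le_of_dvd (by have := Nat.one_lt_pow (n := j) (by omega) hq1; omega) hdvd2
  have hle2 : Fintype.card Fq ^ M.natDegree ≤ Fintype.card Fq ^ j := by
    have h1 : 1 ≤ Fintype.card Fq ^ j := Nat.one_le_pow _ _ (by omega)
    have h2 : 1 ≤ Fintype.card Fq ^ M.natDegree := Nat.one_le_pow _ _ (by omega)
    omega
  have := (Nat.pow_le_pow_iff_right hq1).mp hle2
  omega


lemma stmt7_coeff_pow_card (Fq : Type) [Field Fq] [Fintype Fq]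
    (f : Polynomial (Polynomial Fq)) (k : ℕ) :
    (f ^ Fintype.card Fq).coeff k =
      if Fintype.card Fq ∣ k then (f.coeff (k / Fintype.card Fq)) ^ Fintype.card Fq else 0 := by
  set p := ringChar Fq with hpdef
  haveI hcp : CharP Fq p := ringChar.charP Fq
  obtain ⟨e, hp, hq⟩ := FiniteField.card Fq p
  haveI : Fact p.Prime := ⟨hp⟩
  have hfr : ∀ (n : ℕ) (y : Polynomial Fq),
      (frobenius (Polynomial Fq) p ^ n) y = y ^ p ^ n := by
    intro n
    induction n with
    | zero => intro y; simp [RingHom.one_def]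
    | succ n ih =>
      intro y
      rw [pow_succ, RingHom.mul_def, RingHom.comp_apply, ih, frobenius_def, ← pow_mul, ← pow_succ']

  rw [hq, ← map_iterateFrobenius_expand, coeff_map, iterateFrobenius_def, coeff_expand (pow_pos hp.pos _),
    apply_ite (fun y : Polynomial Fq => y ^ p ^ (e : ℕ)), zero_pow (pow_ne_zero _ hp.ne_zero)]

lemma stmt7_struct (Fq : Type) [Field Fq] [Fintype Fq]
    (Carl : Polynomial Fq → Polynomial (Polynomial Fq))
    (h1 : Carl 1 = X)
    (hT : Carl X = X ^ (Fintype.card Fq) + C X * X)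
    (hadd : ∀ M N : Polynomial Fq, Carl (M + N) = Carl M + Carl N)
    (hsmul : ∀ (a : Fq) (M : Polynomial Fq), Carl (C a * M) = C (C a) * Carl M)
    (hmul : ∀ M N : Polynomial Fq, Carl (M * N) = (Carl M).comp (Carl N)) :
    ∀ P : Polynomial Fq,
      (∀ k : ℕ, (∀ i : ℕ, k ≠ Fintype.card Fq ^ i) → (Carl P).coeff k = 0) ∧
      (Carl P).coeff 1 = P ∧
      (∀ i : ℕ, P.natDegree < i → (Carl P).coeff (Fintype.card Fq ^ i) = 0) ∧
      (Carl P).coeff (Fintype.card Fq ^ P.natDegree) = C P.leadingCoeff := by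
  set q := Fintype.card Fq with hqdef
  have hq2 : 2 ≤ q := Fintype.one_lt_card
  have hconst : ∀ a : Fq, Carl (C a) = C (C a) * X := by
    intro a
    have := hsmul a 1
    rwa [mul_one, h1] at this
  have hbase : ∀ a : Fq,
      (∀ k : ℕ, (∀ i : ℕ, k ≠ q ^ i) → (Carl (C a)).coeff k = 0) ∧
      (Carl (C a)).coeff 1 = C a ∧
      (∀ i : ℕ, (C a).natDegree < i → (Carl (C a)).coeff (q ^ i) = 0) ∧
      (Carl (C a)).coeff (q ^ (C a).natDegree) = C (C a).leadingCoeff := by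
    intro a
    have hco : ∀ k, (Carl (C a)).coeff k = if 1 = k then C a else 0 := by
      intro k
      rw [hconst, coeff_C_mul, coeff_X, mul_ite, mul_one, mul_zero]
    refine ⟨?_, ?_, ?_, ?_⟩
    · intro k hk
      rw [hco, if_neg]
      intro h
      exact hk 0 (by rw [pow_zero]; omega)
    · rw [hco, if_pos rfl]
    · intro i hi
      rw [hco, if_neg]
      have : 1 < q ^ i := Nat.one_lt_pow (by omega) hq2
      omega
    · rw [natDegree_C, pow_zero, hco, if_pos rfl, leadingCoeff_C]
  suffices H : ∀ n : ℕ, ∀ P : Polynomial Fq, P.natDegree ≤ n →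
      (∀ k : ℕ, (∀ i : ℕ, k ≠ q ^ i) → (Carl P).coeff k = 0) ∧
      (Carl P).coeff 1 = P ∧
      (∀ i : ℕ, P.natDegree < i → (Carl P).coeff (q ^ i) = 0) ∧
      (Carl P).coeff (q ^ P.natDegree) = C P.leadingCoeff by
    intro P
    exact H P.natDegree P le_rfl
  intro n
  induction n with
  | zero =>
    intro P hP
    obtain ⟨a, rfl⟩ := natDegree_eq_zero.mp (Nat.le_zero.mp hP)
    exact hbase a
  | succ n ih =>
    intro P hP
    by_cases h0 : P.natDegree = 0
    · obtain ⟨a, rfl⟩ := natDegree_eq_zero.mp h0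
      exact hbase a
    set Q := P.divX with hQdef
    set a := P.coeff 0 with hadef
    have hPQ : Q * X + C a = P := divX_mul_X_add P
    have hQdeg : Q.natDegree = P.natDegree - 1 := natDegree_divX_eq_natDegree_tsub_one
    have hQle : Q.natDegree ≤ n := by omega
    obtain ⟨IH1, IH2, IH3, IH4⟩ := ih Q hQle
    have hCP : Carl P = (Carl Q) ^ q + C X * Carl Q + C (C a) * X := by
      conv_lhs => rw [← hPQ]
      rw [hadd, hconst, mul_comm Q X, hmul, hT, add_comp, X_pow_comp, mul_comp, C_comp, X_comp]
    have hco : ∀ k, (Carl P).coeff k =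
        ((Carl Q) ^ q).coeff k + X * (Carl Q).coeff k + (if 1 = k then C a else 0) := by
      intro k
      rw [hCP, coeff_add, coeff_add, coeff_C_mul, coeff_C_mul, coeff_X, mul_ite, mul_one,
        mul_zero]
    have hm : 1 ≤ P.natDegree := by omega
    have hlcQ : Q.leadingCoeff = P.leadingCoeff := by
      rw [leadingCoeff, hQdeg, hQdef, coeff_divX, leadingCoeff]
      congr 1
      omega
    refine ⟨?_, ?_, ?_, ?_⟩
    · intro k hk
      have hk1 : (1 : ℕ) ≠ k := by
        intro h
        exact hk 0 (by rw [pow_zero]; omega)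
      rw [hco, stmt7_coeff_pow_card, if_neg hk1, IH1 k hk, mul_zero, add_zero]
      by_cases hdk : q ∣ k
      · rw [if_pos hdk, IH1 (k / q), zero_pow (by omega), add_zero]
        intro i h
        apply hk (i + 1)
        rw [pow_succ', ← h, Nat.mul_div_cancel' hdk]
      · rw [if_neg hdk, add_zero]
    · have hnd1 : ¬ q ∣ 1 := by
        intro h
        have := Nat.le_of_dvd one_pos h
        omega
      rw [hco, stmt7_coeff_pow_card, if_neg hnd1, if_pos rfl, IH2, zero_add, ← hPQ]
      ring
    · intro i hi
      have hi1 : 1 ≤ i := by omega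
      have hqi : q ^ i / q = q ^ (i - 1) := by
        have h : q ^ i = q ^ (i - 1) * q := by
          rw [← pow_succ]
          congr 1
          omega
        rw [h, Nat.mul_div_cancel _ (by omega)]
      have hdvd : q ∣ q ^ i := dvd_pow_self q (by omega)
      have h1qi : (1 : ℕ) ≠ q ^ i := by
        have : 1 < q ^ i := Nat.one_lt_pow (by omega) hq2
        omega
      rw [hco, stmt7_coeff_pow_card, if_pos hdvd, if_neg h1qi, hqi, IH3 (i - 1) (by omega),
        IH3 i (by omega), zero_pow (by omega), mul_zero, add_zero, add_zero]
    · have hqm : q ^ P.natDegree / q = q ^ (P.natDegree - 1) := by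
        have h : q ^ P.natDegree = q ^ (P.natDegree - 1) * q := by
          rw [← pow_succ]
          congr 1
          omega
        rw [h, Nat.mul_div_cancel _ (by omega)]
      have hdvd : q ∣ q ^ P.natDegree := dvd_pow_self q (by omega)
      have h1qm : (1 : ℕ) ≠ q ^ P.natDegree := by
        have : 1 < q ^ P.natDegree := Nat.one_lt_pow (by omega) hq2
        omega
      rw [hco, stmt7_coeff_pow_card, if_pos hdvd, if_neg h1qm, hqm, ← hQdeg, IH4,
        IH3 P.natDegree (by omega), mul_zero, add_zero, add_zero, ← C_pow, hlcQ,
        FiniteField.pow_card]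

/-- For `M` monic irreducible of degree `d`, the polynomial `C_M(Z)/Z` is Eisenstein
at the prime `(M)` (non-leading coefficients divisible by `M`, constant term `M`,
leading coefficient `1`, degree `q^d - 1`), hence irreducible over `F_q(T)`. -/
theorem stmt7 (Fq : Type) [Field Fq] [Fintype Fq]
    (Carl : Polynomial Fq → Polynomial (Polynomial Fq))
    (h1 : Carl 1 = X)
    (hT : Carl X = X ^ (Fintype.card Fq) + C X * X)
    (hadd : ∀ M N : Polynomial Fq, Carl (M + N) = Carl M + Carl N)
    (hsmul : ∀ (a : Fq) (M : Polynomial Fq), Carl (C a * M) = C (C a) * Carl M)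
    (hmul : ∀ M N : Polynomial Fq, Carl (M * N) = (Carl M).comp (Carl N))
    (M : Polynomial Fq) (hmonic : M.Monic) (hirr : Irreducible M)
    (d : ℕ) (hd : M.natDegree = d) :
    ∃ ψ : Polynomial (Polynomial Fq),
      Carl M = X * ψ ∧
      ψ.Monic ∧
      ψ.natDegree = Fintype.card Fq ^ d - 1 ∧
      ψ.coeff 0 = M ∧
      ψ.IsEisensteinAt (Ideal.span {M}) ∧
      Irreducible (ψ.map (algebraMap (Polynomial Fq) (RatFunc Fq))) := by
  subst hd
  obtain ⟨shape, hc1, hvanish, htop⟩ := stmt7_struct Fq Carl h1 hT hadd hsmul hmul M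
  set q := Fintype.card Fq with hqdef
  have hq2 : 2 ≤ q := Fintype.one_lt_card
  have hM0 : M ≠ 0 := hmonic.ne_zero
  have hprime : Prime M := hirr.prime
  have hd1 : 1 ≤ M.natDegree := by
    rcases Nat.eq_zero_or_pos M.natDegree with h | h
    · exact absurd (hmonic.natDegree_eq_zero.mp h ▸ hirr.not_isUnit) (by simp)
    · exact h
  set F := Carl M with hFdef
  set dd := M.natDegree with hdd
  have hqd1 : 1 ≤ q ^ dd := Nat.one_le_pow _ _ (by omega)
  have htopM : F.coeff (q ^ dd) = 1 := by rw [htop, hmonic.leadingCoeff, map_one]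
  have hc0F : F.coeff 0 = 0 := by
    apply shape
    intro i
    have := Nat.one_le_pow i q (by omega)
    omega
  -- the quotient ψ
  set ψ := F.divX with hψdef
  have hXψ : F = X * ψ := by
    have h := divX_mul_X_add F
    rw [hc0F, map_zero, add_zero] at h
    rw [← h, mul_comm]
  have hψc : ∀ n, ψ.coeff n = F.coeff (n + 1) := fun n => coeff_divX
  have hψ0 : ψ.coeff 0 = M := by rw [hψc, hc1]
  have hψne : ψ ≠ 0 := by
    intro h
    rw [h, coeff_zero] at hψ0
    exact hM0 hψ0.symm
  have hFdeg : F.natDegree = q ^ dd := by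
    apply le_antisymm
    · rw [natDegree_le_iff_coeff_eq_zero]
      intro m hm
      by_cases hex : ∃ i, m = q ^ i
      · obtain ⟨i, rfl⟩ := hex
        exact hvanish i ((Nat.pow_lt_pow_iff_right hq2).mp hm)
      · exact shape m (fun i h => hex ⟨i, h⟩)
    · exact le_natDegree_of_ne_zero (htopM ▸ one_ne_zero)
  have hψdeg : ψ.natDegree = q ^ dd - 1 := by
    have h := natDegree_mul (X_ne_zero (R := Polynomial Fq)) hψne
    rw [← hXψ, hFdeg, natDegree_X] at h
    omega
  have hψmonic : ψ.Monic := by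
    unfold Polynomial.Monic
    rw [leadingCoeff, hψdeg, hψc]
    have : q ^ dd - 1 + 1 = q ^ dd := by omega
    rw [this, htopM]
  -- representation of F as a sum
  have hinj : ∀ {i j : ℕ}, q ^ i = q ^ j → i = j := fun h =>
    Nat.pow_right_injective hq2 h
  have hrep : F = ∑ i ∈ Finset.range (dd + 1), C (F.coeff (q ^ i)) * X ^ (q ^ i) := by
    refine Polynomial.ext fun k => ?_
    rw [finset_sum_coeff]
    simp only [coeff_C_mul, coeff_X_pow, mul_ite, mul_one, mul_zero]
    by_cases hex : ∃ i, k = q ^ i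
    · obtain ⟨i, rfl⟩ := hex
      by_cases hid : i ≤ dd
      · rw [Finset.sum_eq_single i]
        · rw [if_pos rfl]
        · intro j _ hji
          exact if_neg (fun h => hji (hinj h).symm)
        · intro h
          exact absurd (Finset.mem_range.mpr (by omega)) h
      · rw [hvanish i (by omega)]
        symm
        apply Finset.sum_eq_zero
        intro j hj
        rw [Finset.mem_range] at hj
        exact if_neg (fun h => (by omega : ¬ i = j) (hinj h))
    · rw [shape k (fun i h => hex ⟨i, h⟩)]
      symm
      apply Finset.sum_eq_zero
      intro j _
      exact if_neg (fun h => hex ⟨j, h⟩)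
  -- Frobenius on sums of two elements
  have hfrob : ∀ (u v : Polynomial (Polynomial Fq)) (i : ℕ),
      (u + v) ^ q ^ i = u ^ q ^ i + v ^ q ^ i := by
    intro u v i
    set p := ringChar Fq with hpdef
    haveI hcp : CharP Fq p := ringChar.charP Fq
    obtain ⟨e, hp, hqe⟩ := FiniteField.card Fq p
    haveI : Fact p.Prime := ⟨hp⟩
    rw [hqdef, hqe, ← pow_mul, add_pow_char_pow]
  -- the key identity
  have hiden : ∀ j : ℕ, 1 ≤ j → j ≤ dd →
      (X ^ q ^ j - X) * F.coeff (q ^ j) =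
        F.coeff (q ^ (j - 1)) ^ q - F.coeff (q ^ (j - 1)) := by
    intro j hj1 hjd
    have hE : (Carl X).comp F = F.comp (Carl X) := by
      rw [hFdef, ← hmul, ← hmul, mul_comm]
    rw [hT] at hE
    rw [add_comp, X_pow_comp, mul_comp, C_comp, X_comp] at hE
    conv_rhs at hE => rw [hrep]
    rw [sum_comp] at hE
    simp only [mul_comp, C_comp, X_pow_comp] at hE
    have hpow : ∀ i : ℕ, (X ^ q + C X * X : Polynomial (Polynomial Fq)) ^ q ^ i =
        X ^ q ^ (i + 1) + C (X ^ q ^ i) * X ^ q ^ i := by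
      intro i
      rw [hfrob, ← pow_mul, ← pow_succ', mul_pow, ← C_pow]
    simp only [hpow] at hE
    have hE2 := congrArg (fun g => g.coeff (q ^ j)) hE
    simp only [coeff_add, finset_sum_coeff, mul_add, coeff_C_mul, coeff_X_pow, mul_ite,
      mul_one, mul_zero] at hE2
    rw [stmt7_coeff_pow_card] at hE2
    rw [← hqdef] at hE2
    have hdvd : q ∣ q ^ j := dvd_pow_self q (by omega)
    have hqj : q ^ j / q = q ^ (j - 1) := by
      have h : q ^ j = q ^ (j - 1) * q := by
        rw [← pow_succ]
        congr 1
        omega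
      rw [h, Nat.mul_div_cancel _ (by omega)]
    rw [if_pos hdvd, hqj] at hE2
    have hsum1 : (∑ x ∈ Finset.range (dd + 1),
        ((if q ^ j = q ^ (x + 1) then F.coeff (q ^ x) else 0) +
          if q ^ j = q ^ x then F.coeff (q ^ x) * X ^ q ^ x else 0)) =
        F.coeff (q ^ (j - 1)) + F.coeff (q ^ j) * X ^ q ^ j := by
      rw [Finset.sum_add_distrib]
      congr 1
      · rw [Finset.sum_eq_single (j - 1)]
        · rw [if_pos (by congr 1; omega)]
        · intro i _ hij
          exact if_neg (fun h => hij (by have := hinj h; omega))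
        · intro h
          exact absurd (Finset.mem_range.mpr (by omega)) h
      · rw [Finset.sum_eq_single j]
        · rw [if_pos rfl]
        · intro i _ hij
          exact if_neg (fun h => hij (hinj h).symm)
        · intro h
          exact absurd (Finset.mem_range.mpr (by omega)) h
    rw [hsum1] at hE2
    -- hE2 : c(j-1)^q + X * c j = c (j-1) + c j * X^{q^j}
    linear_combination -hE2
  -- divisibility of the lower coefficients
  have key : ∀ j : ℕ, j ≤ dd - 1 → M ∣ F.coeff (q ^ j) := by
    intro j
    induction j with
    | zero => intro _; rw [pow_zero, hc1]
    | succ j ihj =>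
      intro hj
      have h1 := ihj (by omega)
      have h2 : M ∣ F.coeff (q ^ j) ^ q - F.coeff (q ^ j) :=
        dvd_sub (dvd_pow h1 (by omega)) h1
      have h3 := hiden (j + 1) (by omega) (by omega)
      simp only [Nat.add_sub_cancel] at h3
      rw [← h3] at h2
      rcases hprime.dvd_mul.mp h2 with h | h
      · exact absurd h (stmt7_not_dvd Fq hmonic hirr (by omega) (by omega))
      · exact h
  -- Eisenstein
  have hEis : ψ.IsEisensteinAt (Ideal.span {M}) := by
    refine ⟨?_, ?_, ?_⟩
    · rw [hψmonic.leadingCoeff, Ideal.mem_span_singleton]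
      intro h
      exact hirr.not_isUnit (isUnit_of_dvd_one h)
    · intro n hn
      rw [Ideal.mem_span_singleton, hψc]
      rw [hψdeg] at hn
      by_cases hex : ∃ i, n + 1 = q ^ i
      · obtain ⟨i, hi⟩ := hex
        have hiq : q ^ i < q ^ dd := by omega
        have : i < dd := (Nat.pow_lt_pow_iff_right hq2).mp hiq
        rw [hi]
        exact key i (by omega)
      · rw [shape (n + 1) (fun i h => hex ⟨i, h⟩)]
        exact dvd_zero M
    · rw [hψ0, pow_two, Ideal.span_singleton_mul_span_singleton, Ideal.mem_span_singleton]
      rintro ⟨r, hr⟩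
      apply hirr.not_isUnit
      have : M * 1 = M * (M * r) := by rw [mul_one, ← mul_assoc, ← hr]
      have h1 := mul_left_cancel₀ hM0 this
      exact IsUnit.of_mul_eq_one (a := M) r h1.symm
  have hψnd : 0 < ψ.natDegree := by
    rw [hψdeg]
    have : q ≤ q ^ dd := Nat.le_self_pow (by omega) q
    omega
  have hψirr : Irreducible ψ :=
    hEis.irreducible ((Ideal.span_singleton_prime hM0).mpr hprime) hψmonic.isPrimitive
      (by omega)
  exact ⟨ψ, hXψ, hψmonic, hψdeg, hψ0, hEis,
    (hψmonic.irreducible_iff_irreducible_map_fraction_map).mp hψirr⟩
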